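/- arXiv:2507.12926 — 2 statements merged into one kernel-verified Lean document; each statement's English description precedes it below -/
import Mathlib

section
/- For every real constant C > 1 there exists an integer D0 such that for every integer D ≥ D0 there exists ℓ0 such that the following holds for every integer ℓ ≥ ℓ0 with k = D²ℓ²: for every linear subspace X ⊆ ℝ^{k+1} of dimension r with 1 ≤ r ≤ Cℓ, if y is sampled from the uniform probability measure ℙ on S^k, then ℙ(‖π_X(y)‖ > α_C·√ℓ/(2√k)) ≤ (p_C/10)^{Cℓ}, where π_X is the orthogonal projection of ℝ^{k+1} onto X and ‖·‖ is the Euclidean norm. -/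
open MeasureTheory Real
open scoped ENNReal RealInnerProductSpace BigOperators

noncomputable section

/-- The ambient Euclidean space `ℝ^{k+1}`. -/
abbrev Amb (k : ℕ) := EuclideanSpace ℝ (Fin (k + 1))

/-- The surface measure on the unit sphere `S^k ⊆ ℝ^{k+1}`, as a measure on the
ambient space. -/
def sphereSurface (k : ℕ) : Measure (Amb k) :=
  ((volume : Measure (Amb k)).toSphere).map Subtype.val

/-- The uniform probability measure `ℙ` on the unit sphere `S^k ⊆ ℝ^{k+1}`
(normalized surface measure), as a measure on the ambient space. -/
def sphereUniform (k : ℕ) : Measure (Amb k) :=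
  (sphereSurface k Set.univ)⁻¹ • sphereSurface k

/-- `c` is the constant `c_{k,p}`: `c ≥ 0` and for a (fixed, arbitrary) unit vector `e`,
`ℙ(⟨x, e⟩ ≤ -c/√k) = p`. -/
def IsCkp (k : ℕ) (p c : ℝ) : Prop :=
  0 ≤ c ∧ ∀ e : Amb k, ‖e‖ = 1 →
    sphereUniform k {x | ⟪x, e⟫ ≤ -c / Real.sqrt k} = ENNReal.ofReal p

/-- `p` is the constant `p_C`: the unique `p ∈ (0,1/2)` with `C = log p / log (1-p)`. -/
def IsPC (C p : ℝ) : Prop :=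
  p ∈ Set.Ioo (0 : ℝ) (1 / 2) ∧ C = Real.log p / Real.log (1 - p)

/-- The constant `α_C`. -/
def alphaC (C pC : ℝ) : ℝ := max 1000 (20 * Real.sqrt (C * Real.log (10 / pC)))




open Set Metric
open scoped Pointwise

set_option maxHeartbeats 1000000

/-- Packing bound: a 1/2-separated set of unit vectors in `ℝ^r` has at most `5^r` elements. -/
lemma packing_bound (r : ℕ) (N : Finset (EuclideanSpace ℝ (Fin r)))
    (hunit : ∀ z ∈ N, ‖z‖ = 1)
    (hsep : (N : Set (EuclideanSpace ℝ (Fin r))).Pairwise fun a b => 1 / 2 ≤ dist a b) :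
    N.card ≤ 5 ^ r := by
  rcases Nat.eq_zero_or_pos r with hr | hr
  · subst hr
    have : N = ∅ := by
      rcases Finset.eq_empty_or_nonempty N with h | ⟨z, hz⟩
      · exact h
      · exfalso
        have h1 := hunit z hz
        have h0 : z = 0 := Subsingleton.elim z 0
        rw [h0] at h1; simp at h1
    simp [this]
  haveI : Nonempty (Fin r) := ⟨⟨0, hr⟩⟩
  set v : ℝ≥0∞ := volume (ball (0 : EuclideanSpace ℝ (Fin r)) 1) with hv
  have hdisj : (N : Set (EuclideanSpace ℝ (Fin r))).PairwiseDisjoint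
      fun z => ball z (4⁻¹ : ℝ) := by
    intro a ha b hb hab
    exact ball_disjoint_ball (le_trans (by norm_num) (hsep ha hb hab))
  have hsum : ∑ z ∈ N, volume (ball z (4⁻¹ : ℝ)) = volume (⋃ z ∈ N, ball z (4⁻¹ : ℝ)) :=
    (measure_biUnion_finset hdisj fun _ _ => measurableSet_ball).symm
  have hsub : (⋃ z ∈ N, ball z (4⁻¹ : ℝ)) ⊆ ball (0 : EuclideanSpace ℝ (Fin r)) (5 / 4) := by
    intro x hx
    simp only [Set.mem_iUnion] at hx
    obtain ⟨z, hz, hxz⟩ := hx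
    rw [mem_ball] at hxz ⊢
    have := hunit z hz
    calc dist x 0 ≤ dist x z + dist z 0 := dist_triangle _ _ _
      _ < 4⁻¹ + 1 := by rw [dist_zero_right, this]; linarith
      _ ≤ 5 / 4 := by norm_num
  have hball : ∀ z : EuclideanSpace ℝ (Fin r),
      volume (ball z (4⁻¹ : ℝ)) = ENNReal.ofReal ((4⁻¹ : ℝ) ^ r) * v := by
    intro z
    rw [hv, Measure.addHaar_ball _ _ (by norm_num : (0:ℝ) ≤ 4⁻¹), finrank_euclideanSpace_fin]
  have hball5 : volume (ball (0 : EuclideanSpace ℝ (Fin r)) (5 / 4))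
      = ENNReal.ofReal ((5 / 4 : ℝ) ^ r) * v := by
    rw [hv, Measure.addHaar_ball _ _ (by norm_num : (0:ℝ) ≤ 5 / 4), finrank_euclideanSpace_fin]
  have hchain : (N.card : ℝ≥0∞) * ENNReal.ofReal ((4⁻¹ : ℝ) ^ r) * v
      ≤ ENNReal.ofReal ((5 / 4 : ℝ) ^ r) * v := by
    calc (N.card : ℝ≥0∞) * ENNReal.ofReal ((4⁻¹ : ℝ) ^ r) * v
        = ∑ z ∈ N, volume (ball z (4⁻¹ : ℝ)) := by
          rw [Finset.sum_congr rfl fun z _ => hball z, Finset.sum_const, nsmul_eq_mul, mul_assoc]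
      _ = volume (⋃ z ∈ N, ball z (4⁻¹ : ℝ)) := hsum
      _ ≤ volume (ball (0 : EuclideanSpace ℝ (Fin r)) (5 / 4)) := measure_mono hsub
      _ = ENNReal.ofReal ((5 / 4 : ℝ) ^ r) * v := hball5
  have hv0 : v ≠ 0 := (measure_ball_pos _ _ one_pos).ne'
  have hvtop : v ≠ ⊤ := measure_ball_lt_top.ne
  have hchain2 : (N.card : ℝ≥0∞) * ENNReal.ofReal ((4⁻¹ : ℝ) ^ r)
      ≤ ENNReal.ofReal ((5 / 4 : ℝ) ^ r) :=
    (ENNReal.mul_le_mul_iff_left hv0 hvtop).1 hchain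
  have hreal : (N.card : ℝ) * (4⁻¹ : ℝ) ^ r ≤ (5 / 4 : ℝ) ^ r := by
    have h := ENNReal.toReal_mono (by simp) hchain2
    rw [ENNReal.toReal_mul, ENNReal.toReal_ofReal (by positivity),
      ENNReal.toReal_ofReal (by positivity)] at h
    simpa using h
  have h4 : (0:ℝ) < (4⁻¹ : ℝ) ^ r := by positivity
  have h54 : (5 / 4 : ℝ) ^ r = 5 ^ r * (4⁻¹ : ℝ) ^ r := by
    rw [← mul_pow]; norm_num
  rw [h54] at hreal
  have hfin : (N.card : ℝ) ≤ 5 ^ r := le_of_mul_le_mul_right hreal h4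
  exact_mod_cast hfin

/-- Existence of a `1/2`-net of unit vectors on the unit sphere of `ℝ^r`. -/
lemma net_exists (r : ℕ) :
    ∃ N : Finset (EuclideanSpace ℝ (Fin r)), N.card ≤ 5 ^ r ∧ (∀ z ∈ N, ‖z‖ = 1) ∧
      ∀ u : EuclideanSpace ℝ (Fin r), ‖u‖ = 1 → ∃ z ∈ N, ‖u - z‖ ≤ 1 / 2 := by
  classical
  set S : Set ℕ := {m | ∃ N : Finset (EuclideanSpace ℝ (Fin r)),
    (∀ z ∈ N, ‖z‖ = 1) ∧
    ((N : Set (EuclideanSpace ℝ (Fin r))).Pairwise fun a b => 1 / 2 ≤ dist a b) ∧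
    N.card = m} with hS
  have hSne : 0 ∈ S := ⟨∅, by simp, by simp, by simp⟩
  have hSbdd : BddAbove S := by
    refine ⟨5 ^ r, fun m hm => ?_⟩
    obtain ⟨N, h1, h2, h3⟩ := hm
    rw [← h3]
    exact packing_bound r N h1 h2
  have hMmem : sSup S ∈ S := Nat.sSup_mem ⟨0, hSne⟩ hSbdd
  obtain ⟨N, hunit, hsep, hcard⟩ := hMmem
  refine ⟨N, ?_, hunit, ?_⟩
  · rw [hcard]; exact csSup_le ⟨0, hSne⟩ fun m hm => by
      obtain ⟨N', h1, h2, h3⟩ := hm; rw [← h3]; exact packing_bound r N' h1 h2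
  · intro u hu
    by_contra hcon
    push_neg at hcon
    have hfar : ∀ z ∈ N, 1 / 2 ≤ dist u z := by
      intro z hz
      rw [dist_eq_norm]
      exact (hcon z hz).le
    have hunotmem : u ∉ N := by
      intro hmem
      have := hcon u hmem
      norm_num at this
    have hins : (N.card + 1 : ℕ) ∈ S := by
      refine ⟨insert u N, ?_, ?_, ?_⟩
      · intro z hz
        rcases Finset.mem_insert.1 hz with h | h
        · rw [h]; exact hu
        · exact hunit z h
      · rw [Finset.coe_insert]
        haveI : Std.Symm (fun a b : EuclideanSpace ℝ (Fin r) => 1 / 2 ≤ dist a b) :=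
          ⟨fun a b hab => by rwa [dist_comm]⟩
        refine Set.pairwise_insert_of_symm |>.2 ⟨hsep, fun z hz _ => hfar z hz⟩
      · rw [Finset.card_insert_of_notMem hunotmem]
    have : N.card + 1 ≤ sSup S := le_csSup hSbdd hins
    omega

lemma sphereSurface_univ (k : ℕ) :
    sphereSurface k Set.univ = (k + 1) * volume (ball (0 : Amb k) 1) := by
  rw [sphereSurface, Measure.map_apply measurable_subtype_coe MeasurableSet.univ,
    Set.preimage_univ, Measure.toSphere_apply_univ, finrank_euclideanSpace_fin]
  norm_cast

lemma sphereSurface_univ_ne_zero (k : ℕ) : sphereSurface k Set.univ ≠ 0 := by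
  rw [sphereSurface_univ]
  exact mul_ne_zero (by simp) (measure_ball_pos _ _ one_pos).ne'

lemma sphereSurface_univ_ne_top (k : ℕ) : sphereSurface k Set.univ ≠ ⊤ := by
  rw [sphereSurface_univ]
  exact ENNReal.mul_ne_top (by simp) measure_ball_lt_top.ne

lemma cap_bound {k : ℕ} {e : Amb k} (he : ‖e‖ = 1) {s : ℝ} (hs0 : 0 < s) (hs : s ≤ 1 / 2) :
    sphereUniform k {x | s < ⟪x, e⟫} ≤
      ENNReal.ofReal (Real.sqrt (1 - s ^ 2) ^ (k + 1)) := by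
  set c : ℝ := Real.sqrt (1 - s ^ 2) with hc
  have hs2 : s ^ 2 ≤ 1 / 4 := by nlinarith
  have hc2 : c ^ 2 = 1 - s ^ 2 := Real.sq_sqrt (by nlinarith)
  have hc0 : 0 ≤ c := Real.sqrt_nonneg _
  have hA : MeasurableSet {x : Amb k | s < ⟪x, e⟫} := by
    have : Continuous fun x : Amb k => ⟪x, e⟫ := continuous_id.inner continuous_const
    exact measurableSet_lt measurable_const this.measurable
  have key : sphereSurface k {x | s < ⟪x, e⟫} ≤
      ENNReal.ofReal (c ^ (k + 1)) * sphereSurface k Set.univ := by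
    rw [sphereSurface, Measure.map_apply measurable_subtype_coe hA,
      Measure.toSphere_apply' _ (measurable_subtype_coe hA), finrank_euclideanSpace_fin]
    rw [Set.image_preimage_eq_inter_range, Subtype.range_coe]
    have hsub : (Ioo (0:ℝ) 1) • ({x : Amb k | s < ⟪x, e⟫} ∩ sphere (0 : Amb k) 1)
        ⊆ closedBall (s • e) c := by
      rintro x hx
      obtain ⟨a, ha, y, hy, rfl⟩ := Set.mem_smul.1 hx
      obtain ⟨ha0, ha1⟩ := ha
      have hy1 : ‖y‖ = 1 := by simpa using hy.2
      have hye : s < ⟪y, e⟫ := hy.1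
      rw [Metric.mem_closedBall, dist_eq_norm]
      have hnorm : ‖a • y - s • e‖ ^ 2 ≤ c ^ 2 := by
        have hexp : ‖a • y - s • e‖ ^ 2
            = ‖a • y‖ ^ 2 - 2 * ⟪a • y, s • e⟫ + ‖s • e‖ ^ 2 := by
          rw [@norm_sub_sq_real]
        have h1 : ‖a • y‖ = a := by
          rw [norm_smul, hy1, Real.norm_eq_abs, abs_of_pos ha0, mul_one]
        have h2 : ‖s • e‖ = s := by
          rw [norm_smul, he, Real.norm_eq_abs, abs_of_pos hs0, mul_one]
        have h3 : ⟪a • y, s • e⟫ = a * (s * ⟪y, e⟫) := by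
          rw [real_inner_smul_left, real_inner_smul_right]
        have hprod : 2 * a * s * s ≤ 2 * a * s * ⟪y, e⟫ := by
          have h5 : (0:ℝ) ≤ 2 * a * s := by positivity
          exact mul_le_mul_of_nonneg_left hye.le h5
        rw [hexp, h1, h2, h3, hc2]
        nlinarith [hprod]
      nlinarith [norm_nonneg (a • y - s • e)]
    calc ((k + 1 : ℕ) : ℝ≥0∞) * volume ((Ioo (0:ℝ) 1) •
            ({x : Amb k | s < ⟪x, e⟫} ∩ sphere (0 : Amb k) 1))
        ≤ ((k + 1 : ℕ) : ℝ≥0∞) * volume (closedBall (s • e) c) := by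
          exact mul_le_mul_right (measure_mono hsub) _
      _ = ((k + 1 : ℕ) : ℝ≥0∞) * (ENNReal.ofReal (c ^ (k + 1)) * volume (ball (0 : Amb k) 1)) := by
          rw [Measure.addHaar_closedBall _ _ hc0, finrank_euclideanSpace_fin]
      _ = ENNReal.ofReal (c ^ (k + 1)) * sphereSurface k Set.univ := by
          rw [sphereSurface_univ]; push_cast; ring
  have h0 := sphereSurface_univ_ne_zero k
  have htop := sphereSurface_univ_ne_top k
  calc sphereUniform k {x | s < ⟪x, e⟫}
      = (sphereSurface k Set.univ)⁻¹ * sphereSurface k {x | s < ⟪x, e⟫} := by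
        rw [sphereUniform, Measure.smul_apply, smul_eq_mul]
    _ ≤ (sphereSurface k Set.univ)⁻¹ *
          (ENNReal.ofReal (c ^ (k + 1)) * sphereSurface k Set.univ) := by gcongr
    _ = ENNReal.ofReal (c ^ (k + 1)) := by
        rw [mul_comm (ENNReal.ofReal _), ← mul_assoc, ENNReal.inv_mul_cancel h0 htop, one_mul]

lemma alphaC_pos' {C pC : ℝ} : 0 < alphaC C pC :=
  lt_of_lt_of_le (by norm_num) (le_max_left _ _)

lemma final_real (C pC : ℝ) (hC : 1 < C) (hp0 : 0 < pC) (hp2 : pC < 1 / 2)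
    (r ℓ k : ℕ) (hr : (r : ℝ) ≤ C * ℓ) (hℓ : 1 ≤ ℓ)
    {s α : ℝ} (hs0 : 0 < s) (hs : s ≤ 1 / 2)
    (hαs : 20 * Real.sqrt (C * Real.log (10 / pC)) ≤ α) (hα0 : 0 < α)
    (hks : (k : ℝ) * s ^ 2 = α ^ 2 * ℓ / 16) :
    (5 : ℝ) ^ r * Real.sqrt (1 - s ^ 2) ^ (k + 1) ≤ (pC / 10) ^ (C * ℓ) := by
  obtain ⟨L, hLdef⟩ : ∃ L, L = Real.log (10 / pC) := ⟨_, rfl⟩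
  rw [← hLdef] at hαs
  have hℓ1 : (1 : ℝ) ≤ (ℓ : ℝ) := by exact_mod_cast hℓ
  have h210 : (2 : ℝ) ≤ 10 / pC := by
    rw [le_div_iff₀ hp0]; nlinarith
  have hL2 : Real.log 2 ≤ L := by rw [hLdef]; exact Real.log_le_log (by norm_num) h210
  have hlog2 : (0.6931471803 : ℝ) < Real.log 2 := Real.log_two_gt_d9
  have hL0 : 0 < L := lt_of_lt_of_le (by linarith) hL2
  have hCL : 0 ≤ C * L := by positivity
  have hα2 : 400 * (C * L) ≤ α ^ 2 := by
    nlinarith [Real.sq_sqrt hCL, Real.sqrt_nonneg (C * L)]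
  have hs2 : s ^ 2 ≤ 1 / 4 := by nlinarith
  have h1s : (0 : ℝ) < 1 - s ^ 2 := by nlinarith
  set c := Real.sqrt (1 - s ^ 2) with hcdef
  have hc0 : 0 < c := Real.sqrt_pos.2 h1s
  have hc1 : c ≤ 1 := Real.sqrt_le_one.2 (by nlinarith)
  have hk0 : (0 : ℝ) ≤ (k : ℝ) := Nat.cast_nonneg k
  -- step 1 : c ^ (k+1) ≤ c ^ k
  have step1 : c ^ (k + 1) ≤ c ^ k := pow_le_pow_of_le_one hc0.le hc1 (Nat.le_succ k)
  -- step 2 : c ^ k = exp (k * log c)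
  have step2 : c ^ k = Real.exp ((k : ℝ) * Real.log c) := by
    rw [Real.exp_nat_mul, Real.exp_log hc0]
  -- step 3 : k * log c ≤ -(α^2 * ℓ / 32)
  have hlogc : Real.log c ≤ -s ^ 2 / 2 := by
    rw [hcdef, Real.log_sqrt h1s.le]
    have := Real.log_le_sub_one_of_pos h1s
    linarith
  have step3 : (k : ℝ) * Real.log c ≤ -(α ^ 2 * ℓ / 32) := by
    have h := mul_le_mul_of_nonneg_left hlogc hk0
    have h2 : (k : ℝ) * (-s ^ 2 / 2) = -((k : ℝ) * s ^ 2) / 2 := by ring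
    rw [hks] at h2
    have h3 : -(α ^ 2 * (ℓ:ℝ) / 16) / 2 = -(α ^ 2 * ℓ / 32) := by ring
    rw [h3] at h2
    linarith
  -- step 4 : 5 ^ r ≤ exp (C * ℓ * log 5)
  have h5pos : (0 : ℝ) < 5 := by norm_num
  have hlog5 : (0 : ℝ) ≤ Real.log 5 := Real.log_nonneg (by norm_num)
  have step4 : (5 : ℝ) ^ r ≤ Real.exp (C * ℓ * Real.log 5) := by
    have h1 : (5 : ℝ) ^ r = Real.exp ((r : ℝ) * Real.log 5) := by
      rw [Real.exp_nat_mul, Real.exp_log h5pos]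
    rw [h1]
    exact Real.exp_le_exp.2 (mul_le_mul_of_nonneg_right hr hlog5)
  -- RHS as exp
  have hRHS : (pC / 10) ^ (C * ℓ) = Real.exp (-L * (C * ℓ)) := by
    rw [Real.rpow_def_of_pos (by positivity : (0:ℝ) < pC / 10)]
    congr 1
    have hinv : pC / 10 = (10 / pC)⁻¹ := by field_simp
    rw [hinv, Real.log_inv, ← hLdef]
  -- final exponent inequality
  have hlog5le : Real.log 5 ≤ 4 := by
    linarith [Real.log_le_sub_one_of_pos h5pos]
  have hexp : C * ℓ * Real.log 5 + -(α ^ 2 * ℓ / 32) ≤ -L * (C * ℓ) := by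
    have hαl : 400 * (C * L) * ℓ ≤ α ^ 2 * ℓ :=
      mul_le_mul_of_nonneg_right hα2 (by linarith)
    have h115 : Real.log 5 ≤ 11.5 * L := by linarith
    have hP : (0 : ℝ) < C * ℓ := mul_pos (lt_trans one_pos hC) (lt_of_lt_of_le one_pos hℓ1)
    linarith [mul_le_mul_of_nonneg_right h115 hP.le, hαl]
  calc (5 : ℝ) ^ r * c ^ (k + 1)
      ≤ Real.exp (C * ℓ * Real.log 5) * Real.exp ((k : ℝ) * Real.log c) := by
        apply mul_le_mul step4 (by rw [← step2]; exact step1) (by positivity)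
          (Real.exp_nonneg _)
    _ ≤ Real.exp (C * ℓ * Real.log 5) * Real.exp (-(α ^ 2 * ℓ / 32)) := by
        exact mul_le_mul_of_nonneg_left (Real.exp_le_exp.2 step3) (Real.exp_nonneg _)
    _ = Real.exp (C * ℓ * Real.log 5 + -(α ^ 2 * ℓ / 32)) := (Real.exp_add _ _).symm
    _ ≤ Real.exp (-L * (C * ℓ)) := Real.exp_le_exp.2 hexp
    _ = (pC / 10) ^ (C * ℓ) := hRHS.symm

lemma sphereUniform_compl_sphere (k : ℕ) :
    sphereUniform k ((sphere (0 : Amb k) 1)ᶜ) = 0 := by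
  have hpre : (Subtype.val ⁻¹' ((sphere (0 : Amb k) 1)ᶜ) :
      Set (sphere (0 : Amb k) 1)) = ∅ := by
    ext x
    simp [x.2]
  rw [sphereUniform, Measure.smul_apply, smul_eq_mul, sphereSurface,
    Measure.map_apply measurable_subtype_coe (isClosed_sphere.measurableSet.compl), hpre,
    measure_empty, mul_zero]


/-!
Statement 3 (Lemma `Volumenonperfect`): for every `C > 1` there is `D0` such that for
every `D ≥ D0` there is `ℓ0` such that for all `ℓ ≥ ℓ0`, `k = D²ℓ²`, and every
`r`-dimensional subspace `X ⊆ ℝ^{k+1}` with `1 ≤ r ≤ Cℓ`, a uniformly random point `y`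
of `S^k` satisfies `ℙ(‖π_X(y)‖ > α_C √ℓ/(2√k)) ≤ (p_C/10)^{Cℓ}`.
-/

theorem volume_nonperfect (C : ℝ) (hC : 1 < C) (pC : ℝ) (hpC : IsPC C pC) :
    ∃ D0 : ℕ, ∀ D : ℕ, D0 ≤ D → ∃ ℓ0 : ℕ, ∀ ℓ : ℕ, ℓ0 ≤ ℓ →
      ∀ k : ℕ, k = D ^ 2 * ℓ ^ 2 →
        ∀ r : ℕ, 1 ≤ r → (r : ℝ) ≤ C * ℓ →
          ∀ X : Submodule ℝ (Amb k), Module.finrank ℝ X = r →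
            (sphereUniform k
                {y | alphaC C pC * Real.sqrt ℓ / (2 * Real.sqrt k) <
                  ‖(X.orthogonalProjection y : Amb k)‖}).toReal
              ≤ (pC / 10) ^ (C * ℓ) := by
  classical
  obtain ⟨⟨hp0, hp2⟩, -⟩ := hpC
  have hα0 : 0 < alphaC C pC := alphaC_pos'
  refine ⟨1, fun D hD => ⟨⌈(alphaC C pC) ^ 2⌉₊ + 1, fun ℓ hℓ0 k hk r hr1 hrC X hX => ?_⟩⟩
  have hℓ1 : 1 ≤ ℓ := le_trans (by omega) hℓ0
  have hD1 : (1 : ℝ) ≤ (D : ℝ) := by exact_mod_cast hD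
  have hℓR : (1 : ℝ) ≤ (ℓ : ℝ) := by exact_mod_cast hℓ1
  have hαℓ : (alphaC C pC) ^ 2 ≤ (ℓ : ℝ) := by
    calc (alphaC C pC) ^ 2 ≤ (⌈(alphaC C pC) ^ 2⌉₊ : ℝ) := Nat.le_ceil _
      _ ≤ (ℓ : ℝ) := by exact_mod_cast le_trans (by omega) hℓ0
  have hk0 : 0 < k := by
    rw [hk]; positivity
  have hkR : (0 : ℝ) < (k : ℝ) := by exact_mod_cast hk0
  -- √k = D * ℓ
  have hsqrtk : Real.sqrt k = (D : ℝ) * ℓ := by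
    have hkeq : (k : ℝ) = ((D : ℝ) * ℓ) ^ 2 := by
      rw [hk]; push_cast; ring
    rw [hkeq, Real.sqrt_sq (by positivity)]
  have hsqrtℓ : (0 : ℝ) < Real.sqrt ℓ := Real.sqrt_pos.2 (by linarith)
  set α := alphaC C pC with hαdef
  set t : ℝ := α * Real.sqrt ℓ / (2 * Real.sqrt k) with htdef
  set s : ℝ := t / 2 with hsdef
  have hαsqℓ : α ≤ Real.sqrt ℓ := by
    rw [show α = Real.sqrt (α ^ 2) from (Real.sqrt_sq hα0.le).symm]
    exact Real.sqrt_le_sqrt hαℓ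
  have ht0 : 0 < t := by
    rw [htdef, hsqrtk]
    positivity
  have hs0 : 0 < s := by rw [hsdef]; linarith
  have hsℓ2 : Real.sqrt ℓ * Real.sqrt ℓ = (ℓ : ℝ) := Real.mul_self_sqrt (by positivity)
  have hs12 : s ≤ 1 / 2 := by
    have key : α * Real.sqrt ℓ ≤ (ℓ : ℝ) := by
      calc α * Real.sqrt ℓ ≤ Real.sqrt ℓ * Real.sqrt ℓ :=
            mul_le_mul_of_nonneg_right hαsqℓ hsqrtℓ.le
        _ = (ℓ : ℝ) := hsℓ2
    have hDℓ : (ℓ : ℝ) ≤ (D : ℝ) * ℓ := by nlinarith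
    rw [hsdef, htdef, hsqrtk, div_div, div_le_iff₀ (by positivity)]
    nlinarith [key, hDℓ]
  have hks : (k : ℝ) * s ^ 2 = α ^ 2 * ℓ / 16 := by
    rw [hsdef, htdef]
    rw [div_pow, div_pow, mul_pow, mul_pow]
    rw [Real.sq_sqrt (by positivity : (0:ℝ) ≤ (ℓ:ℝ)), Real.sq_sqrt hkR.le]
    field_simp
    ring
  -- the net in X
  have hfr : Module.finrank ℝ ↥X = r := hX
  obtain ⟨N0, hcard0, hunit0, hcov0⟩ := net_exists r
  let e : ↥X ≃ₗᵢ[ℝ] EuclideanSpace ℝ (Fin r) :=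
    ((stdOrthonormalBasis ℝ ↥X).reindex (finCongr hfr)).repr
  set N : Finset ↥X := N0.image e.symm with hNdef
  have hcardN : N.card ≤ 5 ^ r := le_trans Finset.card_image_le hcard0
  have hunitN : ∀ w ∈ N, ‖w‖ = 1 := by
    intro w hw
    obtain ⟨z, hz, rfl⟩ := Finset.mem_image.1 hw
    rw [e.symm.norm_map]
    exact hunit0 z hz
  have hcovN : ∀ u : ↥X, ‖u‖ = 1 → ∃ w ∈ N, ‖u - w‖ ≤ 1 / 2 := by
    intro u hu
    obtain ⟨z, hz, hzle⟩ := hcov0 (e u) (by rw [e.norm_map]; exact hu)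
    refine ⟨e.symm z, Finset.mem_image_of_mem _ hz, ?_⟩
    have : u - e.symm z = e.symm (e u - z) := by
      rw [map_sub, e.symm_apply_apply]
    rw [this, e.symm.norm_map]
    exact hzle
  -- inclusion of the event (restricted to the sphere) into the union of caps
  set E : Set (Amb k) := {y | t < ‖(X.orthogonalProjection y : Amb k)‖} with hEdef
  have hEsub : E ∩ sphere (0 : Amb k) 1 ⊆
      ⋃ w ∈ N, {x : Amb k | s < ⟪x, ((w : ↥X) : Amb k)⟫} := by
    rintro y ⟨hyE, _⟩
    set w0 : ↥X := X.orthogonalProjection y with hw0def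
    have hnw : t < ‖w0‖ := by
      have : ‖(w0 : Amb k)‖ = ‖w0‖ := rfl
      rw [← this]; exact hyE
    have hw0ne : w0 ≠ 0 := by
      intro h
      rw [h] at hnw
      simp at hnw
      linarith
    set u : ↥X := ‖w0‖⁻¹ • w0 with hudef
    have hu1 : ‖u‖ = 1 := norm_smul_inv_norm hw0ne
    obtain ⟨w, hwN, hle⟩ := hcovN u hu1
    refine Set.mem_biUnion hwN ?_
    show s < ⟪y, ((w : ↥X) : Amb k)⟫
    -- ⟪y, w⟫ = ⟪w0, w⟫
    have horth : y - (w0 : Amb k) ∈ Xᗮ := X.sub_starProjection_mem_orthogonal y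
    have h0 : ⟪((w : ↥X) : Amb k), y - (w0 : Amb k)⟫ = 0 :=
      horth ((w : ↥X) : Amb k) (w : ↥X).2
    have h1 : ⟪y, ((w : ↥X) : Amb k)⟫ = ⟪(w0 : Amb k), ((w : ↥X) : Amb k)⟫ := by
      have h2 := inner_sub_right (𝕜 := ℝ) ((w : ↥X) : Amb k) y (w0 : Amb k)
      rw [h0] at h2
      have h3 : ⟪((w : ↥X) : Amb k), y⟫ = ⟪((w : ↥X) : Amb k), (w0 : Amb k)⟫ := by
        linarith [h2]
      have hc1 : ⟪y, ((w : ↥X) : Amb k)⟫ = ⟪((w : ↥X) : Amb k), y⟫ := real_inner_comm _ _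
      have hc2 : ⟪(w0 : Amb k), ((w : ↥X) : Amb k)⟫
          = ⟪((w : ↥X) : Amb k), (w0 : Amb k)⟫ := real_inner_comm _ _
      linarith [h3, hc1, hc2]
    rw [h1, ← Submodule.coe_inner]
    -- now work inside X
    have hwu : ⟪w0, u⟫ = ‖w0‖ := by
      rw [hudef, real_inner_smul_right w0 w0 ‖w0‖⁻¹, real_inner_self_eq_norm_sq]
      have hne : ‖((w0 : ↥X) : Amb k)‖ ≠ 0 :=
        norm_ne_zero_iff.2 (fun hh => hw0ne (Submodule.coe_eq_zero.1 hh))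
      have hcoe : ‖((w0 : ↥X) : Amb k)‖ = ‖w0‖ := rfl
      rw [← hcoe]
      field_simp
    have hcs : |⟪w0, w - u⟫| ≤ ‖w0‖ * ‖w - u‖ := abs_real_inner_le_norm _ _
    have hwu2 : ‖w - u‖ ≤ 1 / 2 := by rw [norm_sub_rev]; exact hle
    have hsplit : ⟪w0, w⟫ = ⟪w0, u⟫ + ⟪w0, w - u⟫ := by
      rw [← inner_add_right]
      congr 1
      abel
    have hlow : -(‖w0‖ * (1 / 2)) ≤ ⟪w0, w⟫ - ‖w0‖ := by
      have habs : -(‖w0‖ * ‖w - u‖) ≤ ⟪w0, w - u⟫ := neg_le_of_abs_le hcs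
      have h4 : ‖w0‖ * ‖w - u‖ ≤ ‖w0‖ * (1 / 2) :=
        mul_le_mul_of_nonneg_left hwu2 (norm_nonneg _)
      rw [hsplit, hwu]
      linarith
    have : ‖w0‖ / 2 ≤ ⟪w0, w⟫ := by linarith
    have hts : t / 2 < ‖w0‖ / 2 := by linarith
    rw [hsdef]
    linarith
  -- measure estimate
  set c : ℝ := Real.sqrt (1 - s ^ 2) with hcdef
  have hchain : sphereUniform k E ≤ ENNReal.ofReal ((5 : ℝ) ^ r * c ^ (k + 1)) := by
    have hstep1 : sphereUniform k E ≤ sphereUniform k (E ∩ sphere (0 : Amb k) 1) := by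
      calc sphereUniform k E
          ≤ sphereUniform k ((E ∩ sphere (0 : Amb k) 1) ∪ (sphere (0 : Amb k) 1)ᶜ) :=
            measure_mono (fun y hy => by
              by_cases hsp : y ∈ sphere (0 : Amb k) 1
              · exact Or.inl ⟨hy, hsp⟩
              · exact Or.inr hsp)
        _ ≤ sphereUniform k (E ∩ sphere (0 : Amb k) 1) +
              sphereUniform k ((sphere (0 : Amb k) 1)ᶜ) := measure_union_le _ _
        _ = sphereUniform k (E ∩ sphere (0 : Amb k) 1) := by
            rw [sphereUniform_compl_sphere, add_zero]
    calc sphereUniform k E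
        ≤ sphereUniform k (E ∩ sphere (0 : Amb k) 1) := hstep1
      _ ≤ sphereUniform k (⋃ w ∈ N, {x : Amb k | s < ⟪x, ((w : ↥X) : Amb k)⟫}) :=
          measure_mono hEsub
      _ ≤ ∑ w ∈ N, sphereUniform k {x : Amb k | s < ⟪x, ((w : ↥X) : Amb k)⟫} :=
          measure_biUnion_finset_le _ _
      _ ≤ ∑ _w ∈ N, ENNReal.ofReal (c ^ (k + 1)) := by
          refine Finset.sum_le_sum fun w hw => ?_
          have hwe : ‖((w : ↥X) : Amb k)‖ = 1 := by
            rw [show ‖((w : ↥X) : Amb k)‖ = ‖(w : ↥X)‖ from rfl]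
            exact hunitN w hw
          exact cap_bound hwe hs0 hs12
      _ = (N.card : ℝ≥0∞) * ENNReal.ofReal (c ^ (k + 1)) := by
          rw [Finset.sum_const, nsmul_eq_mul]
      _ ≤ ((5 ^ r : ℕ) : ℝ≥0∞) * ENNReal.ofReal (c ^ (k + 1)) :=
          mul_le_mul_left (by exact_mod_cast hcardN) _
      _ = ENNReal.ofReal ((5 : ℝ) ^ r * c ^ (k + 1)) := by
          rw [ENNReal.ofReal_mul (by positivity)]
          congr 1
          rw [← ENNReal.ofReal_natCast]
          congr 1
          push_cast
          ring
  have hfinal : (5 : ℝ) ^ r * c ^ (k + 1) ≤ (pC / 10) ^ (C * ℓ) := by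
    refine final_real C pC hC hp0 hp2 r ℓ k hrC hℓ1 hs0 hs12 (le_max_right _ _) hα0 hks
  exact ENNReal.toReal_le_of_le_ofReal
    (Real.rpow_nonneg (by positivity) _)
    (le_trans hchain (ENNReal.ofReal_le_ofReal hfinal))
end
end

section
/- Fix a real constant C > 1. There exist a constant K > 0 and an integer D0 such that for every integer D ≥ D0 there exists ℓ0 such that the following holds for all integers ℓ ≥ ℓ0, k = D²ℓ², 1 ≤ r ≤ Cℓ, and every perfect sequence x[r] = (x_1, …, x_r) in S^k: with v_1, …, v_r the columns of V = X(XᵀX)^{−1}, e_1, …, e_r the associated orthonormal basis, and V_r(i) = span(v_j : j ∈ [r]∖{i}), one has |⟨v_i, e_i⟩ − 1| ≤ K·ℓ/k and ‖π_{V_r(i)}(e_i)‖ ≤ K·√ℓ/√k for every i ∈ [r]. -/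
open MeasureTheory Real
open scoped ENNReal RealInnerProductSpace BigOperators

noncomputable section

/-- A sequence of points of the sphere is perfect (with threshold `b = α_C √ℓ/√k`):
for each `i`, the orthogonal projection of `x i` onto the span of the previous points
has norm at most `b`. -/
def IsPerfect {k r : ℕ} (b : ℝ) (x : Fin r → Amb k) : Prop :=
  ∀ i : Fin r,
    ‖(Submodule.orthogonalProjectionOnto (Submodule.span ℝ (x '' {j | j < i})) (x i) : Amb k)‖ ≤ b

/-- The red common neighbourhood `N(x[r]) ⊆ S^k`. -/
def Nred {k r : ℕ} (c : ℝ) (x : Fin r → Amb k) : Set (Amb k) :=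
  {z | ‖z‖ = 1 ∧ ∀ i, ⟪x i, z⟫ ≤ -c / Real.sqrt k}

/-- The blue common neighbourhood `N̄(x[r]) ⊆ S^k`. -/
def Nblue {k r : ℕ} (c : ℝ) (x : Fin r → Amb k) : Set (Amb k) :=
  {z | ‖z‖ = 1 ∧ ∀ i, -c / Real.sqrt k < ⟪x i, z⟫}

/-- The perfect red neighbourhood `N_per(x[r])`. -/
def NredPer {k r : ℕ} (b c : ℝ) (x : Fin r → Amb k) : Set (Amb k) :=
  {z ∈ Nred c x | IsPerfect b (Fin.snoc x z)}

/-- The perfect blue neighbourhood `N̄_per(x[r])`. -/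
def NbluePer {k r : ℕ} (b c : ℝ) (x : Fin r → Amb k) : Set (Amb k) :=
  {z ∈ Nblue c x | IsPerfect b (Fin.snoc x z)}

/-- The normalized restriction of the uniform sphere measure to a set `S`. -/
def condSphere {k : ℕ} (S : Set (Amb k)) : Measure (Amb k) :=
  (sphereUniform k S)⁻¹ • (sphereUniform k).restrict S

/-- Orthogonal projection `π_{[r]}` onto the span of the sequence `x`. -/
def projSpan {k r : ℕ} (x : Fin r → Amb k) (y : Amb k) : Amb k :=
  (Submodule.orthogonalProjectionOnto (Submodule.span ℝ (Set.range x)) y : Amb k)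

/-!
Statement 14 (Lemma `dist_e_v`): fix `C > 1`.  There are `K > 0` and `D0` such that for
all `D ≥ D0` there is `ℓ0` such that for all `ℓ ≥ ℓ0`, `k = D²ℓ²`, `1 ≤ r ≤ Cℓ` and
every perfect sequence `x[r]` in `S^k`, with `v_1, …, v_r` the columns of
`V = X(XᵀX)^{-1}` (characterized by `v_i ∈ span(x)` and `⟨v_i, x_j⟩ = δ_{ij}`) and
`e_1, …, e_r` the associated orthonormal basis (`e_i ∈ span(x_1, …, x_i)`, orthogonal
to `span(x_1, …, x_{i−1})`, unit, `⟨x_i, e_i⟩ > 0`), one has `|⟨v_i, e_i⟩ − 1| ≤ Kℓ/k`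
and `‖π_{V_r(i)}(e_i)‖ ≤ K√ℓ/√k` for all `i`, where `V_r(i) = span(v_j : j ≠ i)`.
-/

set_option maxHeartbeats 1000000 in
theorem dist_e_v (C : ℝ) (hC : 1 < C) (pC : ℝ) (hpC : IsPC C pC) :
    ∃ K : ℝ, 0 < K ∧ ∃ D0 : ℕ, ∀ D : ℕ, D0 ≤ D → ∃ ℓ0 : ℕ, ∀ ℓ : ℕ, ℓ0 ≤ ℓ →
      ∀ k : ℕ, k = D ^ 2 * ℓ ^ 2 →
        ∀ r : ℕ, 1 ≤ r → (r : ℝ) ≤ C * ℓ →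
          ∀ x : Fin r → Amb k, (∀ i, ‖x i‖ = 1) →
            IsPerfect (alphaC C pC * Real.sqrt ℓ / Real.sqrt k) x →
            ∀ v : Fin r → Amb k,
              (∀ i, v i ∈ Submodule.span ℝ (Set.range x)) →
              (∀ i j, ⟪v i, x j⟫ = if i = j then (1 : ℝ) else 0) →
              ∀ e : Fin r → Amb k,
                (∀ i, e i ∈ Submodule.span ℝ (x '' {j | j ≤ i})) →
                (∀ i j, j < i → ⟪x j, e i⟫ = 0) →
                (∀ i, ‖e i‖ = 1) →
                (∀ i, 0 < ⟪x i, e i⟫) →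
                ∀ i, |⟪v i, e i⟫ - 1| ≤ K * ℓ / k ∧
                  ‖(Submodule.orthogonalProjectionOnto
                      (Submodule.span ℝ (v '' {j | j ≠ i})) (e i) : Amb k)‖
                    ≤ K * Real.sqrt ℓ / Real.sqrt k := by
  set α := alphaC C pC with hαdef
  have hα1000 : (1000 : ℝ) ≤ α := le_max_left _ _
  have hαpos : (0 : ℝ) < α := by linarith
  refine ⟨2 * α ^ 2, by positivity, 1, fun D hD => ⟨max 1 ⌈2 * α ^ 2⌉₊,
    fun ℓ hℓ k hk r hr1 hrC x hx hperf v hvmem hvx e hemem heorth hen hxe i => ?_⟩⟩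
  have hℓ1 : 1 ≤ ℓ := le_trans (le_max_left _ _) hℓ
  have hℓ2 : 2 * α ^ 2 ≤ (ℓ : ℝ) := by
    have : ⌈2 * α ^ 2⌉₊ ≤ ℓ := le_trans (le_max_right _ _) hℓ
    calc 2 * α ^ 2 ≤ (⌈2 * α ^ 2⌉₊ : ℝ) := Nat.le_ceil _
      _ ≤ (ℓ : ℝ) := by exact_mod_cast this
  have hk0 : 0 < k := by
    rw [hk]; exact Nat.mul_pos (pow_pos hD 2) (pow_pos hℓ1 2)
  have hkR : (0 : ℝ) < (k : ℝ) := by exact_mod_cast hk0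
  set b : ℝ := α * Real.sqrt ℓ / Real.sqrt k with hbdef
  have hb0 : 0 ≤ b := by positivity
  have hb2 : b ^ 2 = α ^ 2 * ℓ / k := by
    rw [hbdef, div_pow, mul_pow, Real.sq_sqrt (by positivity : (0:ℝ) ≤ (ℓ:ℝ)),
      Real.sq_sqrt (by positivity : (0:ℝ) ≤ (k:ℝ))]
  have hb2half : b ^ 2 ≤ 1 / 2 := by
    rw [hb2, div_le_iff₀ hkR]
    have hkk : (ℓ : ℝ) * ℓ ≤ (k : ℝ) := by
      have hkD : (k : ℝ) = (D : ℝ) ^ 2 * (ℓ : ℝ) ^ 2 := by exact_mod_cast congrArg Nat.cast hk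
      have hD1 : (1 : ℝ) ≤ (D : ℝ) := by exact_mod_cast hD
      have hD2 : (1 : ℝ) ≤ (D : ℝ) ^ 2 := by nlinarith
      calc (ℓ:ℝ) * ℓ = (ℓ:ℝ) ^ 2 := (sq (ℓ:ℝ)).symm
        _ ≤ (D:ℝ) ^ 2 * (ℓ:ℝ) ^ 2 := le_mul_of_one_le_left (by positivity) hD2
        _ = (k:ℝ) := hkD.symm
    have hℓpos : (0:ℝ) < (ℓ:ℝ) := by exact_mod_cast hℓ1
    nlinarith
  set t : ℝ := ⟪x i, e i⟫ with htdef
  have ht0 : 0 < t := hxe i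
  have ht1 : t ≤ 1 := by
    have := real_inner_le_norm (x i) (e i)
    rwa [hx i, hen i, one_mul] at this
  set W : Submodule ℝ (Amb k) := Submodule.span ℝ (x '' {j | j < i}) with hWdef
  -- e i is orthogonal to W
  have heW : ∀ w ∈ W, ⟪w, e i⟫ = 0 := by
    intro w hw
    induction hw using Submodule.span_induction with
    | mem y hy =>
      obtain ⟨j, hj, rfl⟩ := hy
      exact heorth i j hj
    | zero => simp
    | add a c _ _ ha hc => rw [inner_add_left, ha, hc, add_zero]
    | smul c a _ ha => rw [real_inner_smul_left, ha, mul_zero]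
  -- decompose e i = a • x i + w
  have hei_mem : e i ∈ Submodule.span ℝ (insert (x i) (x '' {j | j < i})) := by
    have hset : x '' {j | j ≤ i} = insert (x i) (x '' {j | j < i}) := by
      rw [show {j : Fin r | j ≤ i} = insert i {j | j < i} by
        ext j; simp [le_iff_lt_or_eq, or_comm, Set.mem_insert_iff]]
      rw [Set.image_insert_eq]
    rw [← hset]; exact hemem i
  rw [Submodule.span_insert, Submodule.mem_sup] at hei_mem
  obtain ⟨y, hy, w, hw, hyw⟩ := hei_mem
  obtain ⟨a, rfl⟩ := Submodule.mem_span_singleton.mp hy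
  have hei_eq : e i = a • x i + w := hyw.symm
  have hat : a * t = 1 := by
    have h1 : ⟪e i, e i⟫ = 1 := by
      rw [real_inner_self_eq_norm_sq, hen i, one_pow]
    rw [hei_eq] at h1
    rw [inner_add_right, real_inner_smul_right, ← hei_eq] at h1
    have hwe : ⟪e i, w⟫ = 0 := by rw [real_inner_comm]; exact heW w hw
    rw [hwe, add_zero] at h1
    rw [real_inner_comm] at h1
    rw [← htdef] at h1
    linarith
  have hxte : x i - t • e i = (-t) • w := by
    have h1 : x i - t • e i = (1 - t * a) • x i + (-t) • w := by
      rw [hei_eq]; module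
    have h2 : 1 - t * a = 0 := by rw [mul_comm]; linarith
    rw [h1, h2, zero_smul, zero_add]
  have hxteW : x i - t • e i ∈ W := by rw [hxte]; exact W.smul_mem _ hw
  -- the projection of x i onto W is x i - t • e i
  have hproj : (Submodule.orthogonalProjectionOnto W (x i) : Amb k) = x i - t • e i := by
    refine Submodule.eq_starProjection_of_mem_of_inner_eq_zero hxteW fun w' hw' => ?_
    rw [show x i - (x i - t • e i) = t • e i by abel, real_inner_smul_left,
      real_inner_comm, heW w' hw', mul_zero]
  have hnle : ‖x i - t • e i‖ ≤ b := by
    rw [← hproj]; exact hperf i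
  have hn2 : ‖x i - t • e i‖ ^ 2 = 1 - t ^ 2 := by
    rw [norm_sub_sq_real, hx i, real_inner_smul_right, ← htdef, norm_smul, hen i]
    simp [abs_of_pos ht0]
    ring
  have h1t2 : 1 - t ^ 2 ≤ b ^ 2 := by
    rw [← hn2]
    exact pow_le_pow_left₀ (norm_nonneg _) hnle 2
  have ht2half : 1 / 2 ≤ t ^ 2 := by linarith
  have hthalf : 1 / 2 ≤ t := by
    have htt : t * t ≤ t := mul_le_of_le_one_right ht0.le ht1
    have hts : t ^ 2 = t * t := sq t
    linarith
  -- v i is orthogonal to W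
  have hviW : ∀ w' ∈ W, ⟪v i, w'⟫ = 0 := by
    intro w' hw'
    induction hw' using Submodule.span_induction with
    | mem y hy =>
      obtain ⟨j, hj, rfl⟩ := hy
      have := hvx i j
      rwa [if_neg (Ne.symm (ne_of_lt hj))] at this
    | zero => simp
    | add a c _ _ ha hc => rw [inner_add_right, ha, hc, add_zero]
    | smul c a _ ha => rw [real_inner_smul_right, ha, mul_zero]
  -- ⟨v i, e i⟩ = 1 / t
  have hvie : ⟪v i, e i⟫ = 1 / t := by
    have h1 : ⟪v i, x i⟫ = 1 := by have := hvx i i; rwa [if_pos rfl] at this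
    have h2 : ⟪v i, x i⟫ = t * ⟪v i, e i⟫ + ⟪v i, x i - t • e i⟫ := by
      rw [inner_sub_right, real_inner_smul_right]; ring
    have h3 : t * ⟪v i, e i⟫ = 1 := by
      have h0 := hviW _ hxteW
      linarith [h1, h2, h0]
    rw [eq_div_iff (ne_of_gt ht0)]
    linarith [h3, mul_comm t ⟪v i, e i⟫]
  constructor
  · -- first bound
    rw [hvie]
    have h6 : t ^ 2 ≤ t := by
      calc t ^ 2 = t * t := sq t
        _ ≤ 1 * t := mul_le_mul_of_nonneg_right ht1 ht0.le
        _ = t := one_mul t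
    have hA : 1 - t ≤ b ^ 2 := by linarith
    have hle : 1 / t - 1 ≤ 2 * b ^ 2 := by
      rw [div_sub_one (ne_of_gt ht0), div_le_iff₀ ht0]
      calc 1 - t ≤ b ^ 2 := hA
        _ = 2 * b ^ 2 * (1 / 2) := by ring
        _ ≤ 2 * b ^ 2 * t := mul_le_mul_of_nonneg_left hthalf (by positivity)
    have habs : |1 / t - 1| = 1 / t - 1 := by
      rw [abs_of_nonneg]
      rw [sub_nonneg, le_div_iff₀ ht0, one_mul]; exact ht1
    rw [habs]
    calc 1 / t - 1 ≤ 2 * b ^ 2 := hle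
      _ = 2 * α ^ 2 * ℓ / k := by rw [hb2]; ring
  · -- second bound
    set U : Submodule ℝ (Amb k) := Submodule.span ℝ (v '' {j | j ≠ i}) with hUdef
    set u : Amb k := e i - t • x i with hudef
    have hxx : ⟪x i, x i⟫ = 1 := by
      rw [real_inner_self_eq_norm_sq, hx i, one_pow]
    have huxj : ∀ j : Fin r, j = i → ⟪u, x j⟫ = 0 := by
      intro j hj; subst hj
      rw [hudef, inner_sub_left, real_inner_smul_left, hxx, real_inner_comm, ← htdef]
      ring
    have hSx : Submodule.span ℝ (Set.range x) = Submodule.span ℝ (Set.range x) := rfl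
    have hei_spanx : e i ∈ Submodule.span ℝ (Set.range x) := by
      refine Submodule.span_mono ?_ (hemem i)
      rintro _ ⟨j, _, rfl⟩; exact Set.mem_range_self j
    have hu_spanx : u ∈ Submodule.span ℝ (Set.range x) :=
      Submodule.sub_mem _ hei_spanx
        (Submodule.smul_mem _ _ (Submodule.subset_span (Set.mem_range_self i)))
    set s : Amb k := ∑ j : Fin r, ⟪u, x j⟫ • v j with hsdef
    have hus_inner : ∀ j : Fin r, ⟪u - s, x j⟫ = 0 := by
      intro j
      have hsj : ⟪s, x j⟫ = ⟪u, x j⟫ := by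
        rw [hsdef, sum_inner]
        rw [Finset.sum_eq_single j]
        · rw [real_inner_smul_left, hvx j j, if_pos rfl, mul_one]
        · intro m _ hm
          rw [real_inner_smul_left, hvx m j, if_neg hm, mul_zero]
        · intro h; exact absurd (Finset.mem_univ j) h
      rw [inner_sub_left, hsj, sub_self]
    have hus_span : u - s ∈ Submodule.span ℝ (Set.range x) := by
      refine Submodule.sub_mem _ hu_spanx (Submodule.sum_mem _ fun j _ => ?_)
      exact Submodule.smul_mem _ _ (hvmem j)
    have hus_orth : ∀ y ∈ Submodule.span ℝ (Set.range x), ⟪u - s, y⟫ = 0 := by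
      intro y hy
      induction hy using Submodule.span_induction with
      | mem y' hy' => obtain ⟨j, rfl⟩ := hy'; exact hus_inner j
      | zero => simp
      | add a c _ _ ha hc => rw [inner_add_right, ha, hc, add_zero]
      | smul c a _ ha => rw [real_inner_smul_right, ha, mul_zero]
    have hus : u = s := by
      have h0 : ⟪u - s, u - s⟫ = 0 := hus_orth _ hus_span
      rw [inner_self_eq_zero, sub_eq_zero] at h0
      exact h0
    have huU : u ∈ U := by
      rw [hus, hsdef]
      refine Submodule.sum_mem _ fun j _ => ?_
      by_cases hj : j = i
      · rw [huxj j hj, zero_smul]; exact Submodule.zero_mem _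
      · exact Submodule.smul_mem _ _
          (Submodule.subset_span (Set.mem_image_of_mem v hj))
    have horthU : ∀ w' ∈ U, ⟪e i - u, w'⟫ = 0 := by
      have hei_u : e i - u = t • x i := by rw [hudef]; abel
      intro w' hw'
      rw [hei_u]
      induction hw' using Submodule.span_induction with
      | mem y hy =>
        obtain ⟨j, hj, rfl⟩ := hy
        rw [real_inner_smul_left, real_inner_comm]
        have := hvx j i
        rw [if_neg hj] at this
        rw [this, mul_zero]
      | zero => simp
      | add a c _ _ ha hc => rw [inner_add_right, ha, hc, add_zero]
      | smul c a _ ha => rw [real_inner_smul_right, ha, mul_zero]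
    have hprojU : (Submodule.orthogonalProjectionOnto U (e i) : Amb k) = u :=
      Submodule.eq_starProjection_of_mem_of_inner_eq_zero huU horthU
    rw [hprojU]
    have hu2 : ‖u‖ ^ 2 = 1 - t ^ 2 := by
      rw [hudef, norm_sub_sq_real, hen i, real_inner_smul_right, norm_smul, hx i,
        real_inner_comm, ← htdef]
      simp [abs_of_pos ht0]
      ring
    have hub : ‖u‖ ≤ b := by
      nlinarith [norm_nonneg u, hu2, h1t2, hb0]
    calc ‖u‖ ≤ b := hub
      _ ≤ 2 * α ^ 2 * Real.sqrt ℓ / Real.sqrt k := by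
        rw [hbdef]
        have h1 : α ≤ 2 * α ^ 2 := by nlinarith
        gcongr
end
end
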